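/- Let u_T : ℝⁿ → ℝ be Lipschitz and set u_T^* := S_T^+(S_T^- u_T). Then u_T^* is the smallest reachable target bounded from below by u_T: (a) S_T^+(S_T^- u_T^*) = u_T^* (u_T^* is reachable) and u_T^*(x) ≥ u_T(x) for all x ∈ ℝⁿ; (b) for every Lipschitz function v : ℝⁿ → ℝ with S_T^+(S_T^- v) = v and v(x) ≥ u_T(x) for all x ∈ ℝⁿ, one has v(x) ≥ u_T^*(x) for all x ∈ ℝⁿ. -/

import Mathlib

open scoped RealInnerProductSpace
open Filter

noncomputable section

/-- `n`-dimensional Euclidean space. -/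
abbrev Euc (n : ℕ) := EuclideanSpace ℝ (Fin n)

/-- A real-valued function on `ℝⁿ` is Lipschitz (with some constant). -/
def IsLip {n : ℕ} (f : Euc n → ℝ) : Prop := ∃ K : NNReal, LipschitzWith K f

/-- The Legendre transform `L(q) = sup_p (⟨q,p⟫ - H(p))`. -/
def legendre {n : ℕ} (H : Euc n → ℝ) (q : Euc n) : ℝ :=
  ⨆ p : Euc n, (⟪q, p⟫ - H p)

/-- The forward Hopf–Lax operator `(S_T^+ g)(x) = inf_y [g(y) + T·L((x-y)/T)]`. -/
def Splus {n : ℕ} (T : ℝ) (L : Euc n → ℝ) (g : Euc n → ℝ) (x : Euc n) : ℝ :=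
  ⨅ y : Euc n, (g y + T * L (T⁻¹ • (x - y)))

/-- The backward operator `(S_T^- g)(x) = sup_y [g(y) - T·L((y-x)/T)]`. -/
def Sminus {n : ℕ} (T : ℝ) (L : Euc n → ℝ) (g : Euc n → ℝ) (x : Euc n) : ℝ :=
  ⨆ y : Euc n, (g y - T * L (T⁻¹ • (y - x)))

/-- The Hessian of `H` is positive definite at every point. -/
def PosDefHessian {n : ℕ} (H : Euc n → ℝ) : Prop :=
  ∀ p v : Euc n, v ≠ 0 → 0 < iteratedFDeriv ℝ 2 H p ![v, v]

/-- `H` is superlinear: `H(p)/‖p‖ → +∞` as `‖p‖ → +∞`. -/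
def Superlinear {n : ℕ} (H : Euc n → ℝ) : Prop :=
  Tendsto (fun p : Euc n => H p / ‖p‖) (cocompact (Euc n)) atTop

namespace SCE

lemma superlinear_bound {n : ℕ} {H : Euc n → ℝ} (hH : Continuous H) (hs : Superlinear H)
    (M : ℝ) : ∃ C : ℝ, 0 ≤ C ∧ ∀ p : Euc n, M * ‖p‖ - C ≤ H p := by
  obtain ⟨S, hScomp, hSsub⟩ := mem_cocompact.mp (hs.eventually_ge_atTop M)
  obtain ⟨m, hm⟩ := (hScomp.image hH).bddBelow
  obtain ⟨R, hR⟩ := hScomp.isBounded.subset_closedBall 0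
  have hR0 : 0 ≤ |R| := abs_nonneg R
  set C : ℝ := max (|M| * |R| - m) (max (-H 0) 0) with hCdef
  have hC0 : 0 ≤ C := le_trans (le_max_right _ _) (le_max_right _ _)
  refine ⟨C, hC0, fun p => ?_⟩
  by_cases hp : p ∈ S
  · have h1 : m ≤ H p := hm (Set.mem_image_of_mem H hp)
    have h2 : ‖p‖ ≤ |R| := le_trans (mem_closedBall_zero_iff.mp (hR hp)) (le_abs_self R)
    have h3 : M * ‖p‖ ≤ |M| * |R| := by
      calc M * ‖p‖ ≤ |M| * ‖p‖ := mul_le_mul_of_nonneg_right (le_abs_self M) (norm_nonneg p)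
        _ ≤ |M| * |R| := mul_le_mul_of_nonneg_left h2 (abs_nonneg M)
    have h4 : |M| * |R| - m ≤ C := le_max_left _ _
    linarith
  · have hp' : M ≤ H p / ‖p‖ := hSsub hp
    rcases eq_or_lt_of_le (norm_nonneg p) with h0 | h0
    · have hpz : p = 0 := norm_eq_zero.mp h0.symm
      have : -H 0 ≤ C := le_trans (le_max_left _ _) (le_max_right _ _)
      rw [hpz, norm_zero]
      linarith
    · have h5 : M * ‖p‖ ≤ H p := (le_div_iff₀ h0).mp hp'
      linarith

lemma legendre_bddAbove {n : ℕ} {H : Euc n → ℝ} (hH : Continuous H) (hs : Superlinear H)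
    (q : Euc n) : BddAbove (Set.range fun p : Euc n => (⟪q, p⟫ : ℝ) - H p) := by
  obtain ⟨C, -, hC⟩ := superlinear_bound hH hs (‖q‖ + 1)
  refine ⟨C, ?_⟩
  rintro _ ⟨p, rfl⟩
  have h1 := real_inner_le_norm q p
  have h2 := hC p
  have h3 := norm_nonneg p
  have h4 : (‖q‖ + 1) * ‖p‖ = ‖q‖ * ‖p‖ + ‖p‖ := by ring
  simp only []
  linarith

lemma legendre_lower {n : ℕ} {H : Euc n → ℝ} (hH : Continuous H) (hs : Superlinear H)
    (M : ℝ) (hM : 0 ≤ M) : ∃ C : ℝ, ∀ q : Euc n, M * ‖q‖ - C ≤ legendre H q := by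
  obtain ⟨C, hC⟩ := ((isCompact_closedBall (0 : Euc n) M).image hH).bddAbove
  refine ⟨C, fun q => ?_⟩
  rcases eq_or_ne q 0 with rfl | hq
  · have h1 : (⟪(0 : Euc n), (0 : Euc n)⟫ : ℝ) - H 0 ≤ legendre H 0 :=
      le_ciSup (legendre_bddAbove hH hs 0) 0
    have h2 : H 0 ≤ C :=
      hC (Set.mem_image_of_mem H (mem_closedBall_zero_iff.mpr (by simp [hM])))
    simp only [inner_zero_left, zero_sub] at h1
    simp only [norm_zero, mul_zero, zero_sub]
    linarith
  · have hq' : 0 < ‖q‖ := norm_pos_iff.mpr hq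
    have hip : (⟪q, (M / ‖q‖) • q⟫ : ℝ) = M * ‖q‖ := by
      rw [real_inner_smul_right, real_inner_self_eq_norm_mul_norm]
      field_simp
    have hnp : ‖(M / ‖q‖) • q‖ ≤ M := by
      rw [norm_smul, Real.norm_eq_abs, abs_of_nonneg (by positivity),
        div_mul_cancel₀ _ hq'.ne']
    have h2 : H ((M / ‖q‖) • q) ≤ C :=
      hC (Set.mem_image_of_mem H (mem_closedBall_zero_iff.mpr hnp))
    have h1 : (⟪q, (M / ‖q‖) • q⟫ : ℝ) - H ((M / ‖q‖) • q) ≤ legendre H q :=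
      le_ciSup (legendre_bddAbove hH hs q) _
    rw [hip] at h1
    linarith


def cost {n : ℕ} (T : ℝ) (L : Euc n → ℝ) (y x : Euc n) : ℝ := T * L (T⁻¹ • (x - y))

lemma Splus_def {n : ℕ} (T : ℝ) (L g : Euc n → ℝ) (x : Euc n) :
    Splus T L g x = ⨅ y : Euc n, (g y + cost T L y x) := rfl

lemma Sminus_def {n : ℕ} (T : ℝ) (L g : Euc n → ℝ) (x : Euc n) :
    Sminus T L g x = ⨆ y : Euc n, (g y - cost T L x y) := rfl

/-- One-sided Lipschitz bound (equivalent to Lipschitz by symmetry). -/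
def OneLip {n : ℕ} (K : ℝ) (g : Euc n → ℝ) : Prop := ∀ x y, g x - g y ≤ K * ‖x - y‖

section ops

variable {n : ℕ} {T : ℝ} {L : Euc n → ℝ}
variable (hC : ∀ K : ℝ, 0 ≤ K → ∃ C : ℝ, ∀ y x : Euc n, K * ‖x - y‖ - C ≤ cost T L y x)

include hC

lemma bddAbove_sminus {K : ℝ} {g : Euc n → ℝ} (hK : 0 ≤ K) (hg : OneLip K g) (x : Euc n) :
    BddAbove (Set.range fun y : Euc n => g y - cost T L x y) := by
  obtain ⟨C, hCb⟩ := hC K hK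
  refine ⟨g x + C, ?_⟩
  rintro _ ⟨y, rfl⟩
  have h1 := hg y x
  have h2 := hCb x y
  simp only []
  linarith

lemma bddBelow_splus {K : ℝ} {g : Euc n → ℝ} (hK : 0 ≤ K) (hg : OneLip K g) (x : Euc n) :
    BddBelow (Set.range fun y : Euc n => g y + cost T L y x) := by
  obtain ⟨C, hCb⟩ := hC K hK
  refine ⟨g x - C, ?_⟩
  rintro _ ⟨y, rfl⟩
  have h1 := hg x y
  have h2 := hCb y x
  simp only []
  linarith

lemma le_splus_sminus {K : ℝ} {g : Euc n → ℝ} (hK : 0 ≤ K) (hg : OneLip K g) (x : Euc n) :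
    g x ≤ Splus T L (Sminus T L g) x := by
  rw [Splus_def]
  refine le_ciInf fun y => ?_
  have h : g x - cost T L y x ≤ Sminus T L g y := by
    rw [Sminus_def]
    exact le_ciSup (bddAbove_sminus hC hK hg y) x
  linarith

lemma sminus_splus_le {K : ℝ} {g : Euc n → ℝ} (hK : 0 ≤ K) (hg : OneLip K g) (x : Euc n) :
    Sminus T L (Splus T L g) x ≤ g x := by
  rw [Sminus_def]
  refine ciSup_le fun y => ?_
  have h : Splus T L g y ≤ g x + cost T L x y := by
    rw [Splus_def]
    exact ciInf_le (bddBelow_splus hC hK hg y) x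
  linarith

lemma sminus_mono {K : ℝ} {g g' : Euc n → ℝ} (hK : 0 ≤ K) (hg' : OneLip K g')
    (hle : ∀ z, g z ≤ g' z) (x : Euc n) : Sminus T L g x ≤ Sminus T L g' x := by
  rw [Sminus_def, Sminus_def]
  refine ciSup_le fun y => ?_
  have h1 : g' y - cost T L x y ≤ ⨆ z : Euc n, (g' z - cost T L x z) :=
    le_ciSup (bddAbove_sminus hC hK hg' x) y
  have h2 := hle y
  linarith

lemma splus_mono {K : ℝ} {g g' : Euc n → ℝ} (hK : 0 ≤ K) (hg : OneLip K g)
    (hle : ∀ z, g z ≤ g' z) (x : Euc n) : Splus T L g x ≤ Splus T L g' x := by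
  rw [Splus_def, Splus_def]
  refine le_ciInf fun y => ?_
  have h1 : (⨅ z : Euc n, (g z + cost T L z x)) ≤ g y + cost T L y x :=
    ciInf_le (bddBelow_splus hC hK hg x) y
  have h2 := hle y
  linarith

lemma oneLip_sminus {K : ℝ} {g : Euc n → ℝ} (hK : 0 ≤ K) (hg : OneLip K g) :
    OneLip K (Sminus T L g) := by
  intro x₁ x₂
  have h : Sminus T L g x₁ ≤ Sminus T L g x₂ + K * ‖x₁ - x₂‖ := by
    rw [Sminus_def, Sminus_def]
    refine ciSup_le fun y => ?_
    have hc : cost T L x₂ (y + (x₂ - x₁)) = cost T L x₁ y := by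
      have hv : y + (x₂ - x₁) - x₂ = y - x₁ := by abel
      simp only [cost, hv]
    have h1 : g (y + (x₂ - x₁)) - cost T L x₂ (y + (x₂ - x₁)) ≤
        ⨆ z : Euc n, (g z - cost T L x₂ z) :=
      le_ciSup (bddAbove_sminus hC hK hg x₂) (y + (x₂ - x₁))
    have h2 : g y - g (y + (x₂ - x₁)) ≤ K * ‖y - (y + (x₂ - x₁))‖ := hg y _
    have hn : ‖y - (y + (x₂ - x₁))‖ = ‖x₁ - x₂‖ := by
      have : y - (y + (x₂ - x₁)) = x₁ - x₂ := by abel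
      rw [this]
    rw [hn] at h2
    rw [hc] at h1
    linarith
  linarith

lemma oneLip_splus {K : ℝ} {g : Euc n → ℝ} (hK : 0 ≤ K) (hg : OneLip K g) :
    OneLip K (Splus T L g) := by
  intro x₁ x₂
  have h : Splus T L g x₁ ≤ Splus T L g x₂ + K * ‖x₁ - x₂‖ := by
    rw [Splus_def, Splus_def]
    have key : ∀ y : Euc n,
        (⨅ z : Euc n, (g z + cost T L z x₁)) - K * ‖x₁ - x₂‖ ≤ g y + cost T L y x₂ := by
      intro y
      have hc : cost T L (y + (x₁ - x₂)) x₁ = cost T L y x₂ := by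
        have hv : x₁ - (y + (x₁ - x₂)) = x₂ - y := by abel
        simp only [cost, hv]
      have h1 : (⨅ z : Euc n, (g z + cost T L z x₁)) ≤
          g (y + (x₁ - x₂)) + cost T L (y + (x₁ - x₂)) x₁ :=
        ciInf_le (bddBelow_splus hC hK hg x₁) (y + (x₁ - x₂))
      have h2 : g (y + (x₁ - x₂)) - g y ≤ K * ‖y + (x₁ - x₂) - y‖ := hg _ y
      have hn : ‖y + (x₁ - x₂) - y‖ = ‖x₁ - x₂‖ := by
        have : y + (x₁ - x₂) - y = x₁ - x₂ := by abel
        rw [this]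
      rw [hn] at h2
      rw [hc] at h1
      linarith
    have := le_ciInf key
    linarith
  linarith

end ops
end SCE

/-- `u_T^* := S_T^+(S_T^- u_T)` is the smallest reachable target bounded
from below by `u_T`: it is reachable, dominates `u_T`, and any reachable Lipschitz target
dominating `u_T` dominates `u_T^*`. -/
theorem semiconcave_envelope_smallest_reachable
    {n : ℕ} (hn : 0 < n) (T : ℝ) (hT : 0 < T)
    (H : Euc n → ℝ) (hH : ContDiff ℝ 2 H)
    (hHconv : PosDefHessian H) (hHsuper : Superlinear H)
    (uT : Euc n → ℝ) (huT : IsLip uT) :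
    (Splus T (legendre H) (Sminus T (legendre H)
          (Splus T (legendre H) (Sminus T (legendre H) uT))) =
        Splus T (legendre H) (Sminus T (legendre H) uT) ∧
      ∀ x : Euc n, uT x ≤ Splus T (legendre H) (Sminus T (legendre H) uT) x) ∧
    ∀ v : Euc n → ℝ, IsLip v →
      Splus T (legendre H) (Sminus T (legendre H) v) = v →
      (∀ x : Euc n, uT x ≤ v x) →
      ∀ x : Euc n, Splus T (legendre H) (Sminus T (legendre H) uT) x ≤ v x := by
  classical
  set L := legendre H with hLdef
  have hcont : Continuous H := hH.continuous
  -- cost lower bound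
  have hC : ∀ K : ℝ, 0 ≤ K → ∃ C : ℝ, ∀ y x : Euc n, K * ‖x - y‖ - C ≤ SCE.cost T L y x := by
    intro K hK
    obtain ⟨C, hlow⟩ := SCE.legendre_lower hcont hHsuper K hK
    refine ⟨T * C, fun y x => ?_⟩
    have h1 := hlow (T⁻¹ • (x - y))
    have hnorm : ‖(T⁻¹ : ℝ) • (x - y)‖ = T⁻¹ * ‖x - y‖ := by
      rw [norm_smul, Real.norm_eq_abs, abs_of_pos (inv_pos.mpr hT)]
    rw [hnorm] at h1
    have h2 := mul_le_mul_of_nonneg_left h1 hT.le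
    have h3 : T * (K * (T⁻¹ * ‖x - y‖) - C) = K * ‖x - y‖ - T * C := by
      field_simp
    rw [h3] at h2
    simpa [SCE.cost] using h2
  -- Lipschitz data for uT
  obtain ⟨Ku, hKu⟩ := huT
  set K : ℝ := (Ku : ℝ) with hKdef
  have hK0 : 0 ≤ K := Ku.coe_nonneg
  have oneLip_of_lip : ∀ (K' : NNReal) (g : Euc n → ℝ), LipschitzWith K' g →
      SCE.OneLip (K' : ℝ) g := by
    intro K' g hg x y
    have := hg.dist_le_mul x y
    rw [Real.dist_eq, dist_eq_norm] at this
    exact le_trans (le_abs_self _) this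
  have hu : SCE.OneLip K uT := oneLip_of_lip Ku uT hKu
  have hw : SCE.OneLip K (Sminus T L uT) := SCE.oneLip_sminus hC hK0 hu
  have hustar : SCE.OneLip K (Splus T L (Sminus T L uT)) := SCE.oneLip_splus hC hK0 hw
  refine ⟨⟨?_, fun x => SCE.le_splus_sminus hC hK0 hu x⟩, ?_⟩
  · funext x
    refine le_antisymm ?_ (SCE.le_splus_sminus hC hK0 hustar x)
    have h1 : ∀ z, Sminus T L (Splus T L (Sminus T L uT)) z ≤ Sminus T L uT z :=
      fun z => SCE.sminus_splus_le hC hK0 hw z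
    exact SCE.splus_mono hC hK0 (SCE.oneLip_sminus hC hK0 hustar) h1 x
  · rintro v ⟨Kv, hKv⟩ hvfix hle x
    have hv : SCE.OneLip (Kv : ℝ) v := oneLip_of_lip Kv v hKv
    have h1 : ∀ z, Sminus T L uT z ≤ Sminus T L v z :=
      fun z => SCE.sminus_mono hC Kv.coe_nonneg hv hle z
    have h2 : Splus T L (Sminus T L uT) x ≤ Splus T L (Sminus T L v) x :=
      SCE.splus_mono hC hK0 (SCE.oneLip_sminus hC hK0 hu) h1 x
    rw [hvfix] at h2
    exact h2
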